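/- Let ρ ∈ (0,1). For every nonnegative integer m, ∑_{n=0}^∞ (1−ρ) ρ^n · (1/((m+1)(1+ρ))) ∑_{k=0}^∞ p(k,n,m) = (1−ρ) ρ^m. In words: when the tagged customer enters the stationary M/M/1-PS queue, the number ν of customers it leaves behind upon service completion is geometrically distributed with parameter ρ. -/

import Mathlib

open MeasureTheory Filter Topology

/-- Pollaczek polynomials with parameters a = 1, b = 0. -/
noncomputable def pol : ℕ → ℝ → ℝ
  | 0, _ => 1
  | 1, x => 2 * x
  | (n+2), x => (2 * ((n:ℝ) + 2) * x * pol (n+1) x - ((n:ℝ) + 1) * pol n x) / ((n:ℝ) + 2)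

/-- Rescaled polynomials `Q_n(x) = ρ^{-n/2} P_n((1+ρ)x/(2√ρ))`. -/
noncomputable def Q (ρ : ℝ) (n : ℕ) (x : ℝ) : ℝ :=
  pol n ((1 + ρ) * x / (2 * Real.sqrt ρ)) / (Real.sqrt ρ) ^ n

/-- `x_ρ(θ) = (2√ρ/(1+ρ)) cos θ`. -/
noncomputable def X (ρ θ : ℝ) : ℝ := (2 * Real.sqrt ρ / (1 + ρ)) * Real.cos θ

/-- Density of the spectral measure in the variable θ. -/
noncomputable def W (θ : ℝ) : ℝ :=
  (Real.sin θ / Real.cosh (Real.pi * (Real.cos θ / Real.sin θ) / 2)) *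
    Real.exp ((θ - Real.pi / 2) * (Real.cos θ / Real.sin θ))

/-- `G_ρ(θ) = 𝒫(θ, √ρ) = ∑ ρ^m Q_m(x_ρ(θ))`. -/
noncomputable def G (ρ θ : ℝ) : ℝ :=
  (1 - 2 * Real.sqrt ρ * Real.cos θ + ρ) ^ (-(1:ℝ)/2) *
    Real.exp ((Real.cos θ / Real.sin θ) *
      Real.arctan (Real.sqrt ρ * Real.sin θ / (1 - Real.sqrt ρ * Real.cos θ)))

/-- Powers of the sub-stochastic tridiagonal matrix `A` of the absorbed M/M/1-PS chain. -/
noncomputable def ker (ρ : ℝ) : ℕ → ℕ → ℕ → ℝ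
  | 0, n, m => if n = m then 1 else 0
  | (k+1), 0, m => (ρ / (1 + ρ)) * ker ρ k 1 m
  | (k+1), (n+1), m => (ρ / (1 + ρ)) * ker ρ k (n+2) m +
      (((n:ℝ) + 1) / (((n:ℝ) + 2) * (1 + ρ))) * ker ρ k n m


section helpers
variable {ρ : ℝ}

lemma ker_zero (n m : ℕ) : ker ρ 0 n m = if n = m then 1 else 0 := rfl
lemma ker_row0 (k m : ℕ) : ker ρ (k+1) 0 m = (ρ/(1+ρ)) * ker ρ k 1 m := rfl
lemma ker_row (k n m : ℕ) : ker ρ (k+1) (n+1) m = (ρ/(1+ρ)) * ker ρ k (n+2) m +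
    (((n:ℝ)+1)/(((n:ℝ)+2)*(1+ρ))) * ker ρ k n m := rfl


lemma ker_nonneg (hρ : 0 < ρ) : ∀ k n m, 0 ≤ ker ρ k n m := by
  intro k
  induction k with
  | zero => intro n m; simp only [_root_.ker]; positivity
  | succ k ih =>
    intro n m
    have hc1 : (0:ℝ) ≤ ρ / (1 + ρ) := by positivity
    match n with
    | 0 =>
      simp only [_root_.ker]
      exact mul_nonneg hc1 (ih 1 m)
    | n+1 =>
      simp only [_root_.ker]
      have hc2 : (0:ℝ) ≤ ((n:ℝ) + 1) / (((n:ℝ) + 2) * (1 + ρ)) := by positivity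
      exact add_nonneg (mul_nonneg hc1 (ih (n+2) m)) (mul_nonneg hc2 (ih n m))

lemma ker_bound (hρ : 0 < ρ) : ∀ k n m, ker ρ k n m ≤
    (2 * Real.sqrt ρ / (1 + ρ)) ^ k * (Real.sqrt ρ) ^ m * ((Real.sqrt ρ)⁻¹) ^ n := by
  set s := Real.sqrt ρ with hsdef
  have hs : 0 < s := Real.sqrt_pos.2 hρ
  have hss : s * s = ρ := Real.mul_self_sqrt hρ.le
  have h1ρ : (0:ℝ) < 1 + ρ := by linarith
  have hsi : s * s⁻¹ = 1 := mul_inv_cancel₀ hs.ne'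
  set L := 2 * s / (1 + ρ) with hLdef
  have hL : 0 < L := by positivity
  intro k
  induction k with
  | zero =>
    intro n m
    simp only [_root_.ker, pow_zero, one_mul]
    split_ifs with h
    · subst h
      rw [inv_pow, mul_inv_cancel₀ (by positivity)]
    · positivity
  | succ k ih =>
    intro n m
    have hA : 0 ≤ L ^ k * s ^ m := by positivity
    match n with
    | 0 =>
      simp only [_root_.ker]
      calc (ρ / (1 + ρ)) * ker ρ k 1 m
          ≤ (ρ / (1 + ρ)) * (L ^ k * s ^ m * (s⁻¹) ^ 1) := by
            apply mul_le_mul_of_nonneg_left (ih 1 m) (by positivity)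
        _ ≤ L ^ (k+1) * s ^ m * (s⁻¹) ^ 0 := by
            have e1 : (ρ / (1 + ρ)) * (L ^ k * s ^ m * (s⁻¹) ^ 1)
                = ((s*s) * s⁻¹ / (1+ρ)) * (L ^ k * s ^ m) := by rw [hss]; ring
            have e2 : L ^ (k+1) * s ^ m * (s⁻¹) ^ 0 = (2*s/(1+ρ)) * (L ^ k * s ^ m) := by
              simp [pow_succ, hLdef]; ring
            have e3 : (s*s) * s⁻¹ / (1+ρ) = s / (1+ρ) := by rw [mul_assoc, hsi, mul_one]
            rw [e1, e2, e3]
            apply mul_le_mul_of_nonneg_right _ hA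
            gcongr
            linarith
    | n+1 =>
      simp only [_root_.ker]
      have key : (ρ / (1 + ρ)) * (L ^ k * s ^ m * (s⁻¹) ^ (n+2))
          + (((n:ℝ) + 1) / (((n:ℝ) + 2) * (1 + ρ))) * (L ^ k * s ^ m * (s⁻¹) ^ n)
          ≤ L ^ (k+1) * s ^ m * (s⁻¹) ^ (n+1) := by
        set B := L ^ k * s ^ m * (s⁻¹) ^ n with hBdef
        have hB : 0 ≤ B := by positivity
        have e1 : (ρ / (1 + ρ)) * (L ^ k * s ^ m * (s⁻¹) ^ (n+2))
            = (ρ * (s⁻¹ * s⁻¹)) * B / (1 + ρ) := by rw [hBdef]; ring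
        have e2 : L ^ (k+1) * s ^ m * (s⁻¹) ^ (n+1) = 2 * (s * s⁻¹) * B / (1 + ρ) := by
          rw [hBdef, hLdef]; ring
        have e3 : ρ * (s⁻¹ * s⁻¹) = 1 := by
          rw [← hss]; field_simp
        rw [e1, e2, e3, hsi, one_mul, mul_one]
        have hfrac : ((n:ℝ) + 1) / (((n:ℝ) + 2) * (1 + ρ)) ≤ 1 / (1 + ρ) := by
          rw [div_le_div_iff₀ (by positivity) h1ρ]
          nlinarith [hρ]
        calc B / (1 + ρ) + ((n:ℝ) + 1) / (((n:ℝ) + 2) * (1 + ρ)) * B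
            ≤ B / (1 + ρ) + 1 / (1 + ρ) * B :=
              add_le_add le_rfl (mul_le_mul_of_nonneg_right hfrac hB)
          _ = 2 * B / (1 + ρ) := by ring
      calc (ρ / (1 + ρ)) * ker ρ k (n+2) m
            + (((n:ℝ) + 1) / (((n:ℝ) + 2) * (1 + ρ))) * ker ρ k n m
          ≤ (ρ / (1 + ρ)) * (L ^ k * s ^ m * (s⁻¹) ^ (n+2))
            + (((n:ℝ) + 1) / (((n:ℝ) + 2) * (1 + ρ))) * (L ^ k * s ^ m * (s⁻¹) ^ n) := by
            exact add_le_add (mul_le_mul_of_nonneg_left (ih (n+2) m) (by positivity))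
              (mul_le_mul_of_nonneg_left (ih n m) (by positivity))
        _ ≤ L ^ (k+1) * s ^ m * (s⁻¹) ^ (n+1) := key

lemma ker_col_aux (k : ℕ) : ∀ n : ℕ,
    (ker ρ (k+1) n 0 = (1/(2*(1+ρ))) * ker ρ k n 1) ∧
    (∀ m : ℕ, ker ρ (k+1) n (m+1) = (ρ/(1+ρ)) * ker ρ k n m +
      (((m:ℝ)+2)/(((m:ℝ)+3)*(1+ρ))) * ker ρ k n (m+2)) := by
  induction k with
  | zero =>
    intro n
    match n with
    | 0 =>
      refine ⟨by simp [_root_.ker], fun m => ?_⟩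
      match m with
      | 0 => simp [_root_.ker]
      | m+1 => simp [_root_.ker]
    | j+1 =>
      refine ⟨?_, fun m => ?_⟩
      · match j with
        | 0 => simp [_root_.ker]
        | j+1 => simp [_root_.ker]
      · rw [ker_row, ker_zero, ker_zero, ker_zero, ker_zero]
        split_ifs <;> try omega
        all_goals try ring
        all_goals (have h : j = m + 1 := by omega
                   subst h; push_cast; ring)
  | succ k hip =>
    intro n
    match n with
    | 0 =>
      refine ⟨?_, fun m => ?_⟩
      · rw [ker_row0, (hip 1).1, ker_row0]
        ring
      · rw [ker_row0, (hip 1).2 m, ker_row0, ker_row0]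
        ring
    | j+1 =>
      refine ⟨?_, fun m => ?_⟩
      · rw [ker_row, (hip (j+2)).1, (hip j).1, ker_row]
        ring
      · rw [ker_row, (hip (j+2)).2 m, (hip j).2 m, ker_row, ker_row]
        ring

lemma ker_symm (hρ : 0 < ρ) : ∀ k n m : ℕ,
    ((n:ℝ)+1) * ρ^n * ker ρ k n m = ((m:ℝ)+1) * ρ^m * ker ρ k m n := by
  have h1ρ : (0:ℝ) < 1 + ρ := by linarith
  intro k
  induction k with
  | zero =>
    intro n m
    rw [ker_zero, ker_zero]
    split_ifs with h1 h2 h3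
    · subst h1; ring
    · omega
    · omega
    · ring
  | succ k ih =>
    intro n m
    match m with
    | 0 =>
      rw [(ker_col_aux k n).1, ker_row0]
      have hne : (1+ρ) ≠ 0 := by positivity
      have hc : (1:ℝ)/(2*(1+ρ)) * 2 = 1/(1+ρ) := by field_simp
      have h1 := ih n 1
      push_cast at h1 ⊢
      linear_combination (1/(2*(1+ρ))) * h1 + (ρ * ker ρ k 1 n) * hc
    | i+1 =>
      rw [(ker_col_aux k n).2 i, ker_row]
      have hne : (1+ρ) ≠ 0 := by positivity
      have hi2 : ((i:ℝ)+2) ≠ 0 := by positivity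
      have hi3 : ((i:ℝ)+3) ≠ 0 := by positivity
      have ha : ((i:ℝ)+2)/(((i:ℝ)+3)*(1+ρ)) * ((i:ℝ)+3) = ((i:ℝ)+2)/(1+ρ) := by
        field_simp
      have hb : ((i:ℝ)+2) * (((i:ℝ)+1)/(((i:ℝ)+2)*(1+ρ))) = ((i:ℝ)+1)/(1+ρ) := by
        field_simp
      have h1 := ih n i
      have h2 := ih n (i+2)
      push_cast at h1 h2 ⊢
      linear_combination (ρ/(1+ρ)) * h1 + (((i:ℝ)+2)/(((i:ℝ)+3)*(1+ρ))) * h2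
        + (ρ^(i+2) * ker ρ k (i+2) n) * ha - (ρ^(i+1) * ker ρ k i n) * hb

end helpers

/-- In the stationary regime, ν is geometric with parameter ρ. -/
theorem stmt9 (ρ : ℝ) (hρ : ρ ∈ Set.Ioo (0:ℝ) 1) (m : ℕ) :
    ∑' n : ℕ, (1 - ρ) * ρ ^ n *
        ((1 / (((m:ℝ) + 1) * (1 + ρ))) * ∑' k : ℕ, ker ρ k n m) = (1 - ρ) * ρ ^ m := by
  obtain ⟨hρ0, hρ1⟩ := hρ
  have h1ρ : (0:ℝ) < 1 + ρ := by linarith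
  set s := Real.sqrt ρ with hsdef
  have hs0 : 0 < s := Real.sqrt_pos.2 hρ0
  have hss : s * s = ρ := Real.mul_self_sqrt hρ0.le
  have hs1 : s < 1 := by nlinarith
  set L := 2 * s / (1 + ρ) with hLdef
  have hL0 : 0 ≤ L := by positivity
  have hL1 : L < 1 := by
    rw [hLdef, div_lt_one h1ρ]; nlinarith [sq_nonneg (1 - s)]
  set C := (s⁻¹) ^ m with hCdef
  have hC0 : 0 < C := by positivity
  have knn := ker_nonneg hρ0
  -- bound on the m-th row
  have bnd : ∀ k n : ℕ, ker ρ k m n ≤ C * L ^ k * s ^ n := by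
    intro k n
    calc ker ρ k m n ≤ L ^ k * s ^ n * (s⁻¹) ^ m := ker_bound hρ0 k m n
      _ = C * L ^ k * s ^ n := by rw [hCdef]; ring
  have sum_geo_s : Summable (fun n : ℕ => s ^ n) := summable_geometric_of_lt_one hs0.le hs1
  have sum_geo_L : Summable (fun k : ℕ => L ^ k) := summable_geometric_of_lt_one hL0 hL1
  have sumRow : ∀ k, Summable (fun n => ker ρ k m n) := by
    intro k
    apply Summable.of_nonneg_of_le (fun n => knn k m n) (fun n => bnd k n)
    exact (sum_geo_s.mul_left (C * L ^ k))
  have sumRowDiv : ∀ k, Summable (fun n => ker ρ k m n / ((n:ℝ)+1)) := by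
    intro k
    apply Summable.of_nonneg_of_le (fun n => div_nonneg (knn k m n) (by positivity))
      (fun n => div_le_self (knn k m n) (by linarith [Nat.cast_nonneg (α := ℝ) n]))
      (sumRow k)
  set R : ℕ → ℝ := fun k => ∑' n, ker ρ k m n with hRdef
  set u : ℕ → ℝ := fun k => ∑' n, ker ρ k m n / ((n:ℝ)+1) with hudef
  have hR0 : R 0 = 1 := by
    rw [hRdef]
    have e : (fun n => ker ρ 0 m n) = fun n => if n = m then (1:ℝ) else 0 := by
      funext n
      rw [ker_zero]
      rcases eq_or_ne n m with h | h
      · simp [h]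
      · simp [h, Ne.symm h]
    simp only [e]
    exact tsum_ite_eq m 1
  have hRnn : ∀ k, 0 ≤ R k := fun k => tsum_nonneg (fun n => knn k m n)
  have hRle : ∀ k, R k ≤ (C / (1 - s)) * L ^ k := by
    intro k
    calc R k ≤ ∑' n, C * L ^ k * s ^ n :=
          (sumRow k).tsum_le_tsum (fun n => bnd k n) (sum_geo_s.mul_left _)
      _ = (C * L ^ k) * ∑' n, s ^ n := tsum_mul_left
      _ = (C / (1 - s)) * L ^ k := by
          rw [tsum_geometric_of_lt_one hs0.le hs1]; field_simp
  have hRtend : Filter.Tendsto R Filter.atTop (nhds 0) := by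
    apply squeeze_zero hRnn hRle
    have := (tendsto_pow_atTop_nhds_zero_of_lt_one hL0 hL1).const_mul (C / (1 - s))
    simpa using this
  -- one-step recursion for row sums
  have hu : ∀ k, u k = (1 + ρ) * (R k - R (k+1)) := by
    intro k
    set v : ℕ → ℝ := fun j => ((j:ℝ)/(((j:ℝ)+1)*(1+ρ))) * ker ρ k m j with hvdef
    have hvnn : ∀ j, 0 ≤ v j := fun j => mul_nonneg (by positivity) (knn k m j)
    have hvsum : Summable v := by
      apply Summable.of_nonneg_of_le hvnn _ (sumRow k)
      intro j
      have hcoef : ((j:ℝ)/(((j:ℝ)+1)*(1+ρ))) ≤ 1 := by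
        rw [div_le_one (by positivity)]
        nlinarith [Nat.cast_nonneg (α := ℝ) j]
      calc v j ≤ 1 * ker ρ k m j := mul_le_mul_of_nonneg_right hcoef (knn k m j)
        _ = ker ρ k m j := one_mul _
    have hveq : ∀ n : ℕ, (((n:ℝ)+2)/(((n:ℝ)+3)*(1+ρ))) * ker ρ k m (n+2) = v (n+2) := by
      intro n
      rw [hvdef]
      push_cast
      have e : ((n:ℝ)+2+1) = (n:ℝ)+3 := by ring
      rw [e]
    have hshift2 : Summable (fun n : ℕ =>
        (((n:ℝ)+2)/(((n:ℝ)+3)*(1+ρ))) * ker ρ k m (n+2)) :=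
      ((summable_nat_add_iff 2).2 hvsum).congr (fun n => (hveq n).symm)
    have step1 : R (k+1) = ker ρ (k+1) m 0 + ∑' n : ℕ, ker ρ (k+1) m (n+1) := by
      rw [hRdef]; exact (sumRow (k+1)).tsum_eq_zero_add
    have step2 : ∑' n : ℕ, ker ρ (k+1) m (n+1) =
        (ρ/(1+ρ)) * R k + ∑' n : ℕ, v (n+2) := by
      rw [tsum_congr (fun n => (ker_col_aux k m).2 n),
        ((sumRow k).mul_left _).tsum_add hshift2, tsum_mul_left,
        tsum_congr hveq]
    have step3 : ∑' n : ℕ, v (n+2) = (∑' j : ℕ, v j) - v 0 - v 1 := by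
      have e1 : ∑' j : ℕ, v j = v 0 + ∑' j : ℕ, v (j+1) := hvsum.tsum_eq_zero_add
      have e2 : ∑' j : ℕ, v (j+1) = v (0+1) + ∑' j : ℕ, v (j+1+1) :=
        ((summable_nat_add_iff 1).2 hvsum).tsum_eq_zero_add
      have e3 : ∑' j : ℕ, v (j+1+1) = ∑' j : ℕ, v (j+2) := tsum_congr (fun j => rfl)
      rw [e2, e3] at e1
      simp only [Nat.zero_add] at e1
      rw [e1]
      ring
    have hv0 : v 0 = 0 := by rw [hvdef]; norm_num
    have hv1 : v 1 = (1/(2*(1+ρ))) * ker ρ k m 1 := by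
      rw [hvdef]; norm_num
    have step4 : ∑' j : ℕ, v j = (1/(1+ρ)) * (R k - u k) := by
      have e : ∀ j : ℕ, v j =
          (1/(1+ρ)) * (ker ρ k m j - ker ρ k m j / ((j:ℝ)+1)) := by
        intro j
        rw [hvdef]
        have hj : ((j:ℝ)+1) ≠ 0 := by positivity
        field_simp
        ring
      rw [tsum_congr e, tsum_mul_left, (sumRow k).tsum_sub (sumRowDiv k)]
    have hcol0 : ker ρ (k+1) m 0 = (1/(2*(1+ρ))) * ker ρ k m 1 := (ker_col_aux k m).1
    have final : R (k+1) = (ρ/(1+ρ)) * R k + (1/(1+ρ)) * (R k - u k) := by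
      rw [step1, step2, step3, step4, hcol0, hv0, hv1]; ring
    have h1ρ' : (1+ρ) ≠ 0 := ne_of_gt h1ρ
    field_simp at final
    linarith
  have hunn : ∀ k, 0 ≤ u k := fun k => tsum_nonneg (fun n => div_nonneg (knn k m n) (by positivity))
  have husum : Summable u := by
    apply Summable.of_nonneg_of_le hunn _ (sum_geo_L.mul_left (C / (1 - s)))
    intro k
    calc u k ≤ R k := (sumRowDiv k).tsum_le_tsum
          (fun n => div_le_self (knn k m n) (by linarith [Nat.cast_nonneg (α := ℝ) n]))
          (sumRow k)
      _ ≤ (C / (1 - s)) * L ^ k := hRle k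
  have hsum_u : ∑' k, u k = 1 + ρ := by
    have hs : HasSum u (1 + ρ) := by
      rw [hasSum_iff_tendsto_nat_of_nonneg hunn]
      have e : ∀ K, ∑ i ∈ Finset.range K, u i = (1+ρ) * (R 0 - R K) := by
        intro K
        rw [show ∑ i ∈ Finset.range K, u i = ∑ i ∈ Finset.range K, (1+ρ)*(R i - R (i+1))
          from Finset.sum_congr rfl (fun i _ => hu i), ← Finset.mul_sum,
          Finset.sum_range_sub' R K]
      simp only [e]
      have : Filter.Tendsto (fun K => (1+ρ) * (R 0 - R K)) Filter.atTop
          (nhds ((1+ρ) * (R 0 - 0))) :=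
        (Filter.Tendsto.const_sub _ hRtend).const_mul _
      simpa [hR0] using this
    exact hs.tsum_eq
  -- swap the double sum
  have sumCol : ∀ n : ℕ, Summable (fun k => ker ρ k m n / ((n:ℝ)+1)) := by
    intro n
    apply Summable.div_const
    apply Summable.of_nonneg_of_le (fun k => knn k m n) (fun k => bnd k n)
    have : Summable (fun k : ℕ => (C * s ^ n) * L ^ k) := sum_geo_L.mul_left _
    apply this.congr
    intro k; ring
  have huncurry : Summable (Function.uncurry (fun (k n : ℕ) => ker ρ k m n / ((n:ℝ)+1))) := by
    apply Summable.of_nonneg_of_le (fun p => div_nonneg (knn p.1 m p.2) (by positivity))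
      (g := fun p : ℕ × ℕ => ker ρ p.1 m p.2 / ((p.2:ℝ)+1)) _
      ((sum_geo_L.mul_of_nonneg sum_geo_s (fun k => by positivity)
        (fun n => by positivity)).mul_left C)
    intro p
    calc ker ρ p.1 m p.2 / ((p.2:ℝ)+1) ≤ ker ρ p.1 m p.2 :=
          div_le_self (knn p.1 m p.2) (by linarith [Nat.cast_nonneg (α := ℝ) p.2])
      _ ≤ C * L ^ p.1 * s ^ p.2 := bnd p.1 p.2
      _ = C * (L ^ p.1 * s ^ p.2) := by ring
  have hswap : ∑' (n : ℕ) (k : ℕ), ker ρ k m n / ((n:ℝ)+1) = 1 + ρ := by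
    rw [huncurry.tsum_comm' sumRowDiv sumCol]
    rw [show ∑' (k : ℕ) (n : ℕ), ker ρ k m n / ((n:ℝ)+1) = ∑' k, u k from rfl]
    exact hsum_u
  -- pointwise rewriting using reversibility
  have hpt : ∀ n : ℕ, (1 - ρ) * ρ ^ n *
      ((1 / (((m:ℝ) + 1) * (1 + ρ))) * ∑' k : ℕ, ker ρ k n m) =
      ((1 - ρ) * ρ ^ m / (1 + ρ)) * ∑' k, ker ρ k m n / ((n:ℝ)+1) := by
    intro n
    have hρn : (ρ:ℝ)^n ≠ 0 := by positivity
    have hn1 : ((n:ℝ)+1) ≠ 0 := by positivity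
    have hm1 : ((m:ℝ)+1) ≠ 0 := by positivity
    have hker : ∀ k, ker ρ k n m =
        (((m:ℝ)+1) * ρ^m / ρ^n) * (ker ρ k m n / ((n:ℝ)+1)) := by
      intro k
      have h := ker_symm hρ0 k n m
      field_simp
      linear_combination h
    rw [tsum_congr hker, tsum_mul_left]
    have hcoef : (1 - ρ) * ρ ^ n * ((1 / (((m:ℝ) + 1) * (1 + ρ))) *
        (((m:ℝ)+1) * ρ^m / ρ^n)) = (1 - ρ) * ρ ^ m / (1 + ρ) := by
      field_simp
    linear_combination (∑' k, ker ρ k m n / ((n:ℝ)+1)) * hcoef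
  rw [tsum_congr hpt, tsum_mul_left, hswap]
  field_simp
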